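/- Let $(P, \le)$ be the poset of pairs $(K,\kappa)$ where $K$ ranges over normal subgroups of a finite group $G$ and $\kappa : K \to A$ is a $G$-stable homomorphism, ordered by $(L,\lambda) \le (K,\kappa)$ iff $L \le K$ and $\kappa|_L = \lambda$. Let $R$ be a commutative ring with free $R$-module $E$ on basis $\{e_{(K,\kappa)}\}$, with multiplication $e_{(K,\kappa)} e_{(L,\lambda)} = e_{(KL,\kappa\lambda)}$ if $\kappa|_{K\cap L} = \lambda|_{K\cap L}$ and $0$ otherwise. Define $f_{(K,\kappa)} = \sum_{(K,\kappa)\le(L,\lambda)} \mu^{\triangleleft}_{K,L}\, e_{(L,\lambda)}$, where $\mu^{\triangleleft}$ is the Möbius function of the poset of normal subgroups of $G$. Then the elements $f_{(K,\kappa)}$ are mutually orthogonal idempotents: $f_{(K,\kappa)} f_{(L,\lambda)} = f_{(K,\kappa)}$ if $(K,\kappa) = (L,\lambda)$, and $0$ otherwise; moreover $e_{(K,\kappa)} f_{(L,\lambda)} = f_{(L,\lambda)}$ if $(K,\kappa)\le(L,\lambda)$ and $0$ otherwise. -/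
import Mathlib


/-- A pair `(K, κ)` with `K ⊴ G` and `κ : K → A` a `G`-stable homomorphism; these are the
`G`-fixed points of `𝓜_G`. -/
structure GPair (G A : Type*) [Group G] [CommGroup A] where
  K : Subgroup G
  normal : K.Normal
  kappa : K →* A
  stable : ∀ (g : G) (k : K),
    kappa ⟨g * (k : G) * g⁻¹, normal.conj_mem (k : G) k.2 g⟩ = kappa k

/-- The partial order: `(K,κ) ≤ (L,λ)` iff `K ≤ L` and `λ|_K = κ`. -/
def GPair.le {G A : Type*} [Group G] [CommGroup A] (p q : GPair G A) : Prop :=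
  p.K ≤ q.K ∧ ∀ (x : G) (hx : x ∈ p.K) (hx' : x ∈ q.K), q.kappa ⟨x, hx'⟩ = p.kappa ⟨x, hx⟩

/-- Compatibility: `κ` and `λ` agree on `K ∩ L`. -/
def GPair.compatible {G A : Type*} [Group G] [CommGroup A] (p q : GPair G A) : Prop :=
  ∀ (x : G) (hx : x ∈ p.K) (hx' : x ∈ q.K), p.kappa ⟨x, hx⟩ = q.kappa ⟨x, hx'⟩

namespace GPair
variable {G A : Type*} [Group G] [CommGroup A]

theorem le_refl' (p : GPair G A) : p.le p := ⟨le_rfl, fun _ _ _ => rfl⟩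

theorem le_trans' {p q r : GPair G A} (h1 : p.le q) (h2 : q.le r) : p.le r :=
  ⟨h1.1.trans h2.1, fun x hx hx' => (h2.2 x (h1.1 hx) hx').trans (h1.2 x hx (h1.1 hx))⟩

theorem ext' {p q : GPair G A} (hK : p.K = q.K)
    (hk : ∀ (x : G) (hx : x ∈ p.K) (hx' : x ∈ q.K), p.kappa ⟨x, hx⟩ = q.kappa ⟨x, hx'⟩) :
    p = q := by
  obtain ⟨K, n, κ, s⟩ := p
  obtain ⟨K', n', κ', s'⟩ := q
  dsimp at hK
  subst hK
  have : κ = κ' := MonoidHom.ext fun ⟨x, hx⟩ => hk x hx hx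
  subst this
  rfl

theorem le_antisymm' {p q : GPair G A} (h1 : p.le q) (h2 : q.le p) : p = q :=
  ext' (le_antisymm h1.1 h2.1) fun x hx hx' => h2.2 x hx' hx

theorem compatible_of_le_le {p t r : GPair G A} (hp : p.le r) (ht : t.le r) :
    p.compatible t := fun x hx hx' => by
  rw [← hp.2 x hx (hp.1 hx), ht.2 x hx' (hp.1 hx)]

theorem compatible_symm {p q : GPair G A} (h : p.compatible q) : q.compatible p :=
  fun x hx hx' => (h x hx' hx).symm

theorem le_of_sup {j R p t : GPair G A} (hK : j.K = p.K ⊔ t.K)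
    (hpj : p.le j) (htj : t.le j) (hpR : p.le R) (htR : t.le R) : j.le R := by
  have hKR : j.K ≤ R.K := by rw [hK]; exact sup_le hpR.1 htR.1
  refine ⟨hKR, fun x hx hx' => ?_⟩
  let M : Subgroup G :=
    { carrier := {x | ∃ (h1 : x ∈ j.K) (h2 : x ∈ R.K), R.kappa ⟨x, h2⟩ = j.kappa ⟨x, h1⟩}
      one_mem' := ⟨one_mem _, one_mem _, by
        have e1 : (⟨1, one_mem j.K⟩ : j.K) = 1 := rfl
        have e2 : (⟨1, one_mem R.K⟩ : R.K) = 1 := rfl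
        rw [e1, e2, map_one, map_one]⟩
      mul_mem' := by
        rintro a b ⟨ha1, ha2, hae⟩ ⟨hb1, hb2, hbe⟩
        refine ⟨mul_mem ha1 hb1, mul_mem ha2 hb2, ?_⟩
        have e1 : (⟨a * b, mul_mem ha1 hb1⟩ : j.K) = ⟨a, ha1⟩ * ⟨b, hb1⟩ := rfl
        have e2 : (⟨a * b, mul_mem ha2 hb2⟩ : R.K) = ⟨a, ha2⟩ * ⟨b, hb2⟩ := rfl
        rw [e1, e2, map_mul, map_mul, hae, hbe]
      inv_mem' := by
        rintro a ⟨ha1, ha2, hae⟩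
        refine ⟨inv_mem ha1, inv_mem ha2, ?_⟩
        have e1 : (⟨a⁻¹, inv_mem ha1⟩ : j.K) = (⟨a, ha1⟩ : j.K)⁻¹ := rfl
        have e2 : (⟨a⁻¹, inv_mem ha2⟩ : R.K) = (⟨a, ha2⟩ : R.K)⁻¹ := rfl
        rw [e1, e2, map_inv, map_inv, hae] }
  have hpM : p.K ≤ M := fun y hy =>
    ⟨hpj.1 hy, hpR.1 hy, by rw [hpR.2 y hy (hpR.1 hy), hpj.2 y hy (hpj.1 hy)]⟩
  have htM : t.K ≤ M := fun y hy =>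
    ⟨htj.1 hy, htR.1 hy, by rw [htR.2 y hy (htR.1 hy), htj.2 y hy (htj.1 hy)]⟩
  have hsub : j.K ≤ M := by rw [hK]; exact sup_le hpM htM
  obtain ⟨h1, h2, heq⟩ := hsub hx
  exact heq

end GPair

open Classical in
/-- `f_{(K,κ)} = ∑_{(K,κ) ≤ (L,λ)} μ^◁_{K,L} e_{(L,λ)}`. -/
noncomputable def fIdem {G A R E : Type*} [Group G] [CommGroup A] [CommRing R]
    [Ring E] [Algebra R E] [Fintype (GPair G A)]
    (e : GPair G A → E) (mu : Subgroup G → Subgroup G → R) (p : GPair G A) : E :=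
  ∑ t : GPair G A, if p.le t then mu p.K t.K • e t else 0

open Classical in
theorem aux_key {G A R E : Type*} [Group G] [CommGroup A] [CommRing R] [Ring E] [Algebra R E]
    [Fintype (GPair G A)]
    (e : GPair G A → E) (mu : Subgroup G → Subgroup G → R)
    (hmu : ∀ p q : GPair G A, p.le q →
      (∑ r : GPair G A, if p.le r ∧ r.le q then mu p.K r.K else 0) =
        if p = q then 1 else 0)
    (p q : GPair G A) (F : GPair G A → E)
    (hF0 : ∀ t, ¬ p.compatible t → F t = 0)
    (hF1 : ∀ t, p.compatible t →
      ∃ r : GPair G A, r.K = p.K ⊔ t.K ∧ p.le r ∧ t.le r ∧ F t = e r) :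
    (∑ t : GPair G A, if q.le t then mu q.K t.K • F t else 0) =
      if p.le q then fIdem e mu q else 0 := by
  set j : GPair G A → GPair G A :=
    fun t => if h : p.compatible t then Classical.choose (hF1 t h) else t with hj
  have jspec : ∀ t (h : p.compatible t),
      (j t).K = p.K ⊔ t.K ∧ p.le (j t) ∧ t.le (j t) ∧ F t = e (j t) := by
    intro t h
    simp only [hj, dif_pos h]
    exact Classical.choose_spec (hF1 t h)
  have step1 : (∑ t : GPair G A, if q.le t then mu q.K t.K • F t else 0) =
      ∑ t : GPair G A, if q.le t ∧ p.compatible t then mu q.K t.K • e (j t) else 0 := by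
    refine Finset.sum_congr rfl fun t _ => ?_
    by_cases h1 : q.le t
    · by_cases h2 : p.compatible t
      · rw [if_pos h1, if_pos ⟨h1, h2⟩, (jspec t h2).2.2.2]
      · rw [if_pos h1, if_neg (fun hc => h2 hc.2), hF0 t h2, smul_zero]
    · rw [if_neg h1, if_neg (fun hc => h1 hc.1)]
  rw [step1]
  by_cases hpq : p.le q
  · rw [if_pos hpq, fIdem]
    refine Finset.sum_congr rfl fun t _ => ?_
    by_cases h1 : q.le t
    · have hpt : p.le t := GPair.le_trans' hpq h1
      have h2 : p.compatible t := GPair.compatible_of_le_le hpt (GPair.le_refl' t)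
      obtain ⟨hK, hpj, htj, hFe⟩ := jspec t h2
      have hjt : j t = t := GPair.le_antisymm'
        (GPair.le_of_sup hK hpj htj hpt (GPair.le_refl' t)) htj
      rw [if_pos ⟨h1, h2⟩, if_pos h1, hjt]
    · rw [if_neg (fun hc => h1 hc.1), if_neg h1]
  · rw [if_neg hpq]
    set c : GPair G A → R :=
      fun r => ∑ t : GPair G A,
        if q.le t ∧ p.compatible t ∧ j t = r then mu q.K t.K else 0 with hc
    have hc0 : ∀ r, ¬ (q.le r ∧ p.le r) → c r = 0 := by
      intro r hr
      refine Finset.sum_eq_zero fun t _ => ?_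
      rw [if_neg]
      rintro ⟨h1, h2, h3⟩
      obtain ⟨hK, hpj, htj, _⟩ := jspec t h2
      exact hr ⟨h3 ▸ GPair.le_trans' h1 htj, h3 ▸ hpj⟩
    have hrec : ∀ R' : GPair G A, q.le R' → p.le R' →
        (∑ r : GPair G A, if r.le R' then c r else 0) = if q = R' then 1 else 0 := by
      intro R' hqR hpR
      have e1 : (∑ r : GPair G A, if r.le R' then c r else 0) =
          ∑ r : GPair G A, ∑ t : GPair G A,
            if q.le t ∧ p.compatible t ∧ j t = r ∧ r.le R' then mu q.K t.K else 0 := by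
        refine Finset.sum_congr rfl fun r _ => ?_
        by_cases h : r.le R'
        · rw [if_pos h]
          simp only [hc]
          refine Finset.sum_congr rfl fun t _ => ?_
          by_cases h' : q.le t ∧ p.compatible t ∧ j t = r
          · rw [if_pos h', if_pos ⟨h'.1, h'.2.1, h'.2.2, h⟩]
          · rw [if_neg h', if_neg (fun hc' => h' ⟨hc'.1, hc'.2.1, hc'.2.2.1⟩)]
        · rw [if_neg h]
          exact (Finset.sum_eq_zero fun t _ => if_neg (fun hc' => h hc'.2.2.2)).symm
      rw [e1, Finset.sum_comm]
      have e2 : ∀ t : GPair G A,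
          (∑ r : GPair G A,
            if q.le t ∧ p.compatible t ∧ j t = r ∧ r.le R' then mu q.K t.K else 0) =
          if q.le t ∧ t.le R' then mu q.K t.K else 0 := by
        intro t
        by_cases h : q.le t ∧ t.le R'
        · have h2 : p.compatible t := GPair.compatible_of_le_le hpR h.2
          obtain ⟨hK, hpj, htj, _⟩ := jspec t h2
          have hjR : (j t).le R' := GPair.le_of_sup hK hpj htj hpR h.2
          rw [if_pos h]
          have e3 : ∀ r : GPair G A,
              (if q.le t ∧ p.compatible t ∧ j t = r ∧ r.le R' then mu q.K t.K else 0) =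
              if j t = r then mu q.K t.K else 0 := by
            intro r
            by_cases h3 : j t = r
            · rw [if_pos h3, if_pos ⟨h.1, h2, h3, h3 ▸ hjR⟩]
            · rw [if_neg h3, if_neg (fun hc' => h3 hc'.2.2.1)]
          rw [Finset.sum_congr rfl fun r _ => e3 r, Finset.sum_ite_eq]
          exact if_pos (Finset.mem_univ _)
        · rw [if_neg h]
          refine Finset.sum_eq_zero fun r _ => ?_
          rw [if_neg]
          rintro ⟨h1, h2, h3, h4⟩
          obtain ⟨_, _, htj, _⟩ := jspec t h2
          exact h ⟨h1, GPair.le_trans' htj (h3 ▸ h4)⟩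
      rw [Finset.sum_congr rfl fun t _ => e2 t]
      exact hmu q R' hqR
    have key : ∀ n (R' : GPair G A), (Finset.univ.filter (fun s : GPair G A => s.le R')).card ≤ n →
        q.le R' → p.le R' → c R' = 0 := by
      intro n
      induction n with
      | zero =>
        intro R' hcard hq hp'
        exfalso
        have : R' ∈ Finset.univ.filter (fun s : GPair G A => s.le R') :=
          Finset.mem_filter.mpr ⟨Finset.mem_univ R', GPair.le_refl' R'⟩
        have := Finset.card_pos.mpr ⟨R', this⟩
        omega
      | succ n ih =>
        intro R' hcard hq hp'
        have hrecR := hrec R' hq hp'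
        rw [← Finset.add_sum_erase _ _ (Finset.mem_univ R'), if_pos (GPair.le_refl' R')] at hrecR
        have hzero : (∑ r ∈ Finset.univ.erase R', if r.le R' then c r else 0) = 0 := by
          refine Finset.sum_eq_zero fun r hr => ?_
          by_cases h1 : r.le R'
          · rw [if_pos h1]
            by_cases h2 : q.le r ∧ p.le r
            · refine ih r ?_ h2.1 h2.2
              have hss : Finset.univ.filter (fun s : GPair G A => s.le r) ⊂
                  Finset.univ.filter (fun s : GPair G A => s.le R') := by
                constructor
                · intro s hs
                  simp only [Finset.mem_filter] at *
                  exact ⟨hs.1, GPair.le_trans' hs.2 h1⟩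
                · intro hsub
                  have hmem : R' ∈ Finset.univ.filter (fun s : GPair G A => s.le r) :=
                    hsub (Finset.mem_filter.mpr ⟨Finset.mem_univ _, GPair.le_refl' R'⟩)
                  have hRr : R'.le r := (Finset.mem_filter.mp hmem).2
                  exact (Finset.mem_erase.mp hr).1 (GPair.le_antisymm' h1 hRr)
              have := Finset.card_lt_card hss
              omega
            · exact hc0 r h2
          · rw [if_neg h1]
        rw [hzero, add_zero] at hrecR
        have hqR : q ≠ R' := by
          rintro rfl
          exact hpq hp'
        rwa [if_neg hqR] at hrecR
    have final : (∑ t : GPair G A,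
        if q.le t ∧ p.compatible t then mu q.K t.K • e (j t) else 0) =
        ∑ r : GPair G A, c r • e r := by
      have e1 : ∀ t : GPair G A,
          (if q.le t ∧ p.compatible t then mu q.K t.K • e (j t) else 0) =
          ∑ r : GPair G A,
            if q.le t ∧ p.compatible t ∧ j t = r then mu q.K t.K • e r else 0 := by
        intro t
        by_cases h : q.le t ∧ p.compatible t
        · rw [if_pos h]
          have e3 : ∀ r : GPair G A,
              (if q.le t ∧ p.compatible t ∧ j t = r then mu q.K t.K • e r else 0) =
              if j t = r then mu q.K t.K • e r else 0 := by
            intro r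
            by_cases h3 : j t = r
            · rw [if_pos h3, if_pos ⟨h.1, h.2, h3⟩]
            · rw [if_neg h3, if_neg (fun hc' => h3 hc'.2.2)]
          rw [Finset.sum_congr rfl fun r _ => e3 r, Finset.sum_ite_eq,
            if_pos (Finset.mem_univ _)]
        · rw [if_neg h]
          exact (Finset.sum_eq_zero fun r _ => if_neg (fun hc' => h ⟨hc'.1, hc'.2.1⟩)).symm
      rw [Finset.sum_congr rfl fun t _ => e1 t, Finset.sum_comm]
      refine Finset.sum_congr rfl fun r _ => ?_
      simp only [hc]
      rw [Finset.sum_smul]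
      refine Finset.sum_congr rfl fun t _ => ?_
      by_cases h : q.le t ∧ p.compatible t ∧ j t = r
      · rw [if_pos h, if_pos h]
      · rw [if_neg h, if_neg h, zero_smul]
    rw [final]
    refine Finset.sum_eq_zero fun r _ => ?_
    by_cases h : q.le r ∧ p.le r
    · rw [key (Finset.univ.filter (fun s : GPair G A => s.le r)).card r le_rfl h.1 h.2, zero_smul]
    · rw [hc0 r h, zero_smul]

open Classical in
/-- Proposition 4.4: in the free `R`-module `E` on the basis `e_{(K,κ)}` with multiplication
`e_{(K,κ)} e_{(L,λ)} = e_{(KL, κλ)}` if `κ, λ` agree on `K ∩ L` and `0` otherwise, the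
elements `f_{(K,κ)}` (defined by Möbius inversion along the poset of normal subgroups)
are mutually orthogonal idempotents, and `e_{(K,κ)} f_{(L,λ)} = f_{(L,λ)} e_{(K,κ)}`
equals `f_{(L,λ)}` if `(K,κ) ≤ (L,λ)` and `0` otherwise. -/
theorem f_orthogonal_idempotents {G A R E : Type*} [Group G] [Finite G] [CommGroup A]
    [CommRing R] [Ring E] [Algebra R E] [Fintype (GPair G A)]
    (e : GPair G A → E) (hbasis : LinearIndependent R e)
    (hmul0 : ∀ p q : GPair G A, ¬ p.compatible q → e p * e q = 0)
    (hmul1 : ∀ p q : GPair G A, p.compatible q →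
      ∃ r : GPair G A, r.K = p.K ⊔ q.K ∧ p.le r ∧ q.le r ∧ e p * e q = e r)
    (mu : Subgroup G → Subgroup G → R)
    (hmu : ∀ p q : GPair G A, p.le q →
      (∑ r : GPair G A, if p.le r ∧ r.le q then mu p.K r.K else 0) =
        if p = q then 1 else 0) :
    ∀ p q : GPair G A,
      (fIdem e mu p * fIdem e mu q = if p = q then fIdem e mu p else 0) ∧
      (e p * fIdem e mu q = if p.le q then fIdem e mu q else 0) ∧
      (fIdem e mu q * e p = if p.le q then fIdem e mu q else 0) := by
  have key₁ : ∀ p q : GPair G A,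
      e p * fIdem e mu q = if p.le q then fIdem e mu q else 0 := by
    intro p q
    have expand : e p * fIdem e mu q =
        ∑ t : GPair G A, if q.le t then mu q.K t.K • (e p * e t) else 0 := by
      rw [fIdem, Finset.mul_sum]
      refine Finset.sum_congr rfl fun t _ => ?_
      by_cases h : q.le t
      · rw [if_pos h, if_pos h, mul_smul_comm]
      · rw [if_neg h, if_neg h, mul_zero]
    rw [expand]
    exact aux_key e mu hmu p q (fun t => e p * e t) (hmul0 p) (hmul1 p)
  have key₂ : ∀ p q : GPair G A,
      fIdem e mu q * e p = if p.le q then fIdem e mu q else 0 := by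
    intro p q
    have expand : fIdem e mu q * e p =
        ∑ t : GPair G A, if q.le t then mu q.K t.K • (e t * e p) else 0 := by
      rw [fIdem, Finset.sum_mul]
      refine Finset.sum_congr rfl fun t _ => ?_
      by_cases h : q.le t
      · rw [if_pos h, if_pos h, smul_mul_assoc]
      · rw [if_neg h, if_neg h, zero_mul]
    rw [expand]
    refine aux_key e mu hmu p q (fun t => e t * e p) ?_ ?_
    · intro t h
      exact hmul0 t p fun hc => h (GPair.compatible_symm hc)
    · intro t h
      obtain ⟨r, hK, h1, h2, h3⟩ := hmul1 t p (GPair.compatible_symm h)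
      exact ⟨r, by rw [hK, sup_comm], h2, h1, h3⟩
  have key₃ : ∀ p q : GPair G A,
      fIdem e mu p * fIdem e mu q = if p = q then fIdem e mu p else 0 := by
    intro p q
    have expand : fIdem e mu p * fIdem e mu q =
        ∑ t : GPair G A, if p.le t then mu p.K t.K • (e t * fIdem e mu q) else 0 := by
      rw [fIdem, Finset.sum_mul]
      refine Finset.sum_congr rfl fun t _ => ?_
      by_cases h : p.le t
      · rw [if_pos h, if_pos h, smul_mul_assoc]
      · rw [if_neg h, if_neg h, zero_mul]
    rw [expand]
    have term : ∀ t : GPair G A,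
        (if p.le t then mu p.K t.K • (e t * fIdem e mu q) else 0) =
        (if p.le t ∧ t.le q then mu p.K t.K else 0) • fIdem e mu q := by
      intro t
      rw [key₁ t q]
      by_cases h1 : p.le t
      · by_cases h2 : t.le q
        · rw [if_pos h1, if_pos h2, if_pos ⟨h1, h2⟩]
        · rw [if_pos h1, if_neg h2, if_neg (fun hc => h2 hc.2), smul_zero, zero_smul]
      · rw [if_neg h1, if_neg (fun hc => h1 hc.1), zero_smul]
    rw [Finset.sum_congr rfl fun t _ => term t, ← Finset.sum_smul]
    by_cases hpq : p.le q
    · rw [hmu p q hpq]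
      by_cases h : p = q
      · subst h
        rw [if_pos rfl, if_pos rfl, one_smul]
      · rw [if_neg h, if_neg h, zero_smul]
    · have hne : p ≠ q := fun h => hpq (h ▸ GPair.le_refl' p)
      rw [if_neg hne]
      have : (∑ t : GPair G A, if p.le t ∧ t.le q then mu p.K t.K else 0) = 0 :=
        Finset.sum_eq_zero fun t _ =>
          if_neg fun hc => hpq (GPair.le_trans' hc.1 hc.2)
      rw [this, zero_smul]
  intro p q
  exact ⟨key₃ p q, key₁ p q, key₂ p q⟩
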